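/- Let b ∈ ℝ^K, c ∈ ℝ^N, ĥ ∈ ℝ^K, m̂ ∈ ℝ^N, and set ŵ = bᵀĥ, x̂ = cᵀm̂ and ŷ = ŵ·x̂, and assume ŷ ≠ 0. Let s = sign(ŷ), t = sign(ŵ), and α = t(ŵ + s·x̂)/2. Then the function ĝ : ℝ^K × ℝ^N → ℝ defined by ĝ(h,m) = α·(√(4|ŷ| + (bᵀh − s·cᵀm)²) − t(bᵀh + s·cᵀm)) is differentiable at (ĥ, m̂) with gradient ∇ĝ(ĥ, m̂) = −s·(x̂·b, ŵ·c) ∈ ℝ^{K+N}; in particular ĝ(ĥ, m̂) = 0. -/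

import Mathlib

open Real

private lemma sign_cases {x : ℝ} (hx : x ≠ 0) :
    (0 < x ∧ Real.sign x = 1) ∨ (x < 0 ∧ Real.sign x = -1) := by
  rcases hx.lt_or_gt with h | h
  · exact Or.inr ⟨h, Real.sign_of_neg h⟩
  · exact Or.inl ⟨h, Real.sign_of_pos h⟩

private lemma sqrt_key (wh xh : ℝ) (hw : wh ≠ 0) (hx : xh ≠ 0) :
    Real.sqrt (4 * |wh * xh| + (wh - Real.sign (wh * xh) * xh) ^ 2) = |wh| + |xh| := by
  rcases sign_cases hw with ⟨h1, e1⟩ | ⟨h1, e1⟩ <;> rcases sign_cases hx with ⟨h2, e2⟩ | ⟨h2, e2⟩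
  · rw [Real.sign_of_pos (mul_pos h1 h2), abs_of_pos (mul_pos h1 h2),
      abs_of_pos h1, abs_of_pos h2,
      show 4 * (wh * xh) + (wh - 1 * xh) ^ 2 = (wh + xh) ^ 2 by ring,
      Real.sqrt_sq (by linarith)]
  · rw [Real.sign_of_neg (mul_neg_of_pos_of_neg h1 h2),
      abs_of_neg (mul_neg_of_pos_of_neg h1 h2), abs_of_pos h1, abs_of_neg h2,
      show 4 * -(wh * xh) + (wh - -1 * xh) ^ 2 = (wh - xh) ^ 2 by ring,
      Real.sqrt_sq (by linarith)]
    ring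
  · rw [Real.sign_of_neg (mul_neg_of_neg_of_pos h1 h2),
      abs_of_neg (mul_neg_of_neg_of_pos h1 h2), abs_of_neg h1, abs_of_pos h2,
      show 4 * -(wh * xh) + (wh - -1 * xh) ^ 2 = (xh - wh) ^ 2 by ring,
      Real.sqrt_sq (by linarith)]
    ring
  · rw [Real.sign_of_pos (mul_pos_of_neg_of_neg h1 h2),
      abs_of_pos (mul_pos_of_neg_of_neg h1 h2), abs_of_neg h1, abs_of_neg h2,
      show 4 * (wh * xh) + (wh - 1 * xh) ^ 2 = (-(wh + xh)) ^ 2 by ring,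
      Real.sqrt_sq (by linarith)]
    ring

private lemma tws_key (wh xh : ℝ) (hw : wh ≠ 0) (hx : xh ≠ 0) :
    Real.sign wh * (wh + Real.sign (wh * xh) * xh) = |wh| + |xh| := by
  rcases sign_cases hw with ⟨h1, e1⟩ | ⟨h1, e1⟩ <;> rcases sign_cases hx with ⟨h2, e2⟩ | ⟨h2, e2⟩
  · rw [e1, Real.sign_of_pos (mul_pos h1 h2), abs_of_pos h1, abs_of_pos h2]; ring
  · rw [e1, Real.sign_of_neg (mul_neg_of_pos_of_neg h1 h2), abs_of_pos h1, abs_of_neg h2]; ring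
  · rw [e1, Real.sign_of_neg (mul_neg_of_neg_of_pos h1 h2), abs_of_neg h1, abs_of_pos h2]; ring
  · rw [e1, Real.sign_of_pos (mul_pos_of_neg_of_neg h1 h2), abs_of_neg h1, abs_of_neg h2]; ring

private lemma alg_key (wh xh Wv Xv : ℝ) (hw : wh ≠ 0) (hx : xh ≠ 0) :
    Real.sign wh * (wh + Real.sign (wh * xh) * xh) / 2 *
      (1 / (2 * (|wh| + |xh|)) * (2 * (wh - Real.sign (wh * xh) * xh) *
        (Wv - Real.sign (wh * xh) * Xv)) -
       Real.sign wh * (Wv + Real.sign (wh * xh) * Xv))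
    = -(Real.sign (wh * xh) * xh) * Wv - Real.sign (wh * xh) * wh * Xv := by
  rcases sign_cases hw with ⟨h1, e1⟩ | ⟨h1, e1⟩ <;> rcases sign_cases hx with ⟨h2, e2⟩ | ⟨h2, e2⟩
  · rw [e1, Real.sign_of_pos (mul_pos h1 h2), abs_of_pos h1, abs_of_pos h2]
    have : wh + xh ≠ 0 := ne_of_gt (by linarith)
    field_simp
    ring
  · rw [e1, Real.sign_of_neg (mul_neg_of_pos_of_neg h1 h2), abs_of_pos h1, abs_of_neg h2]
    have : wh + -xh ≠ 0 := ne_of_gt (by linarith)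
    field_simp
    ring
  · rw [e1, Real.sign_of_neg (mul_neg_of_neg_of_pos h1 h2), abs_of_neg h1, abs_of_pos h2]
    have : -wh + xh ≠ 0 := ne_of_gt (by linarith)
    field_simp
    ring
  · rw [e1, Real.sign_of_pos (mul_pos_of_neg_of_neg h1 h2), abs_of_neg h1, abs_of_neg h2]
    have : -wh + -xh ≠ 0 := ne_of_gt (by linarith)
    field_simp
    ring

theorem gradient_of_ghat {K N : ℕ} (b : Fin K → ℝ) (c : Fin N → ℝ)
    (hh : Fin K → ℝ) (mh : Fin N → ℝ)
    (hy : (∑ i, b i * hh i) * (∑ j, c j * mh j) ≠ 0) :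
    let wh : ℝ := ∑ i, b i * hh i
    let xh : ℝ := ∑ j, c j * mh j
    let yh : ℝ := wh * xh
    let s : ℝ := Real.sign yh
    let t : ℝ := Real.sign wh
    let α : ℝ := t * (wh + s * xh) / 2
    let g : EuclideanSpace ℝ (Fin K ⊕ Fin N) → ℝ := fun v =>
      α * (Real.sqrt (4 * |yh| + ((∑ i, b i * v (Sum.inl i)) - s * ∑ j, c j * v (Sum.inr j)) ^ 2)
        - t * ((∑ i, b i * v (Sum.inl i)) + s * ∑ j, c j * v (Sum.inr j)))
    let pt : EuclideanSpace ℝ (Fin K ⊕ Fin N) := WithLp.toLp 2 (fun i => Sum.elim hh mh i)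
    let grad : EuclideanSpace ℝ (Fin K ⊕ Fin N) := WithLp.toLp 2 (fun i =>
      Sum.elim (fun i => -s * (xh * b i)) (fun j => -s * (wh * c j)) i)
    HasGradientAt g grad pt ∧ g pt = 0 := by
  intro wh xh yh s t α g pt grad
  obtain ⟨hw, hx⟩ : wh ≠ 0 ∧ xh ≠ 0 := mul_ne_zero_iff.mp hy
  have hyne : yh ≠ 0 := mul_ne_zero hw hx
  have hpt1 : ∀ i, pt (Sum.inl i) = hh i := fun i => rfl
  have hpt2 : ∀ j, pt (Sum.inr j) = mh j := fun j => rfl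
  have hW1 : (∑ i, b i * pt (Sum.inl i)) = wh := rfl
  have hX1 : (∑ j, c j * pt (Sum.inr j)) = xh := rfl
  set r0 : ℝ := 4 * |yh| + (wh - s * xh) ^ 2 with hr0def
  have hr0pos : 0 < r0 := by
    have : (0:ℝ) < |yh| := abs_pos.mpr hyne
    positivity
  have hsqrt : Real.sqrt r0 = |wh| + |xh| := sqrt_key wh xh hw hx
  -- linear parts
  have hWd : HasFDerivAt (fun v : EuclideanSpace ℝ (Fin K ⊕ Fin N) => ∑ i, b i * v (Sum.inl i))
      (∑ i, b i • (EuclideanSpace.proj (Sum.inl i) :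
        EuclideanSpace ℝ (Fin K ⊕ Fin N) →L[ℝ] ℝ)) pt :=
    HasFDerivAt.fun_sum fun i _ =>
      ((EuclideanSpace.proj (Sum.inl i) :
        EuclideanSpace ℝ (Fin K ⊕ Fin N) →L[ℝ] ℝ).hasFDerivAt.const_mul (b i))
  have hXd : HasFDerivAt (fun v : EuclideanSpace ℝ (Fin K ⊕ Fin N) => ∑ j, c j * v (Sum.inr j))
      (∑ j, c j • (EuclideanSpace.proj (Sum.inr j) :
        EuclideanSpace ℝ (Fin K ⊕ Fin N) →L[ℝ] ℝ)) pt :=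
    HasFDerivAt.fun_sum fun j _ =>
      ((EuclideanSpace.proj (Sum.inr j) :
        EuclideanSpace ℝ (Fin K ⊕ Fin N) →L[ℝ] ℝ).hasFDerivAt.const_mul (c j))
  set W := (∑ i, b i • (EuclideanSpace.proj (Sum.inl i) :
      EuclideanSpace ℝ (Fin K ⊕ Fin N) →L[ℝ] ℝ)) with hWdef
  set X := (∑ j, c j • (EuclideanSpace.proj (Sum.inr j) :
      EuclideanSpace ℝ (Fin K ⊕ Fin N) →L[ℝ] ℝ)) with hXdef
  have hpd : HasFDerivAt
      (fun v : EuclideanSpace ℝ (Fin K ⊕ Fin N) =>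
        (∑ i, b i * v (Sum.inl i)) - s * ∑ j, c j * v (Sum.inr j)) (W - s • X) pt :=
    hWd.sub (hXd.const_mul s)
  have hqd : HasFDerivAt
      (fun v : EuclideanSpace ℝ (Fin K ⊕ Fin N) =>
        (∑ i, b i * v (Sum.inl i)) + s * ∑ j, c j * v (Sum.inr j)) (W + s • X) pt :=
    hWd.add (hXd.const_mul s)
  -- outer scalar function
  have houter : HasDerivAt (fun u : ℝ => Real.sqrt (4 * |yh| + u ^ 2))
      (1 / (2 * Real.sqrt r0) * ((2 : ℕ) * (wh - s * xh) ^ (2 - 1))) (wh - s * xh) := by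
    have h1 : HasDerivAt (fun u : ℝ => 4 * |yh| + u ^ 2)
        ((2 : ℕ) * (wh - s * xh) ^ (2 - 1)) (wh - s * xh) :=
      (hasDerivAt_pow 2 (wh - s * xh)).const_add (4 * |yh|)
    exact (Real.hasDerivAt_sqrt hr0pos.ne').comp (wh - s * xh) h1
  have hsqd : HasFDerivAt
      (fun v : EuclideanSpace ℝ (Fin K ⊕ Fin N) =>
        Real.sqrt (4 * |yh| +
          ((∑ i, b i * v (Sum.inl i)) - s * ∑ j, c j * v (Sum.inr j)) ^ 2))
      ((1 / (2 * Real.sqrt r0) * ((2 : ℕ) * (wh - s * xh) ^ (2 - 1))) • (W - s • X)) pt := by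
    have := houter.comp_hasFDerivAt pt hpd
    exact this
  have hgd : HasFDerivAt g
      ((Real.sign wh * (wh + s * xh) / 2) •
        ((1 / (2 * Real.sqrt r0) * ((2 : ℕ) * (wh - s * xh) ^ (2 - 1))) • (W - s • X)
          - Real.sign wh • (W + s • X))) pt :=
    (hsqd.sub (hqd.const_mul t)).const_mul α
  constructor
  · rw [hasGradientAt_iff_hasFDerivAt]
    refine hgd.congr_fderiv (Eq.symm ?_)
    apply ContinuousLinearMap.ext
    intro v
    have hWv : W v = ∑ i, b i * v (Sum.inl i) := by
      simp [hWdef, ContinuousLinearMap.sum_apply]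
    have hXv : X v = ∑ j, c j * v (Sum.inr j) := by
      simp [hXdef, ContinuousLinearMap.sum_apply]
    have lhs_eq : (InnerProductSpace.toDual ℝ (EuclideanSpace ℝ (Fin K ⊕ Fin N)) grad) v
        = -(s * xh) * (∑ i, b i * v (Sum.inl i)) - s * wh * (∑ j, c j * v (Sum.inr j)) := by
      rw [InnerProductSpace.toDual_apply_apply]
      rw [PiLp.inner_apply]
      rw [Fintype.sum_sum_type]
      have e1 : ∀ i : Fin K, (inner ℝ (grad (Sum.inl i)) (v (Sum.inl i)) : ℝ)
          = -(s * xh) * (b i * v (Sum.inl i)) := by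
        intro i; simp only [RCLike.inner_apply', conj_trivial]
        show (-s * (xh * b i)) * v (Sum.inl i) = _
        ring
      have e2 : ∀ j : Fin N, (inner ℝ (grad (Sum.inr j)) (v (Sum.inr j)) : ℝ)
          = -(s * wh) * (c j * v (Sum.inr j)) := by
        intro j; simp only [RCLike.inner_apply', conj_trivial]
        show (-s * (wh * c j)) * v (Sum.inr j) = _
        ring
      rw [Finset.sum_congr rfl fun i _ => e1 i, Finset.sum_congr rfl fun j _ => e2 j,
        ← Finset.mul_sum, ← Finset.mul_sum]
      ring
    rw [lhs_eq]
    simp only [ContinuousLinearMap.sub_apply, ContinuousLinearMap.add_apply,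
      ContinuousLinearMap.smul_apply, smul_eq_mul, hWv, hXv]
    rw [hsqrt]
    have halg := alg_key wh xh (∑ i, b i * v (Sum.inl i)) (∑ j, c j * v (Sum.inr j)) hw hx
    rw [← halg]
    push_cast
    ring
  · show α * (Real.sqrt (4 * |yh| +
        ((∑ i, b i * pt (Sum.inl i)) - s * ∑ j, c j * pt (Sum.inr j)) ^ 2)
        - t * ((∑ i, b i * pt (Sum.inl i)) + s * ∑ j, c j * pt (Sum.inr j))) = 0
    rw [hW1, hX1]
    have : Real.sqrt (4 * |yh| + (wh - s * xh) ^ 2) = |wh| + |xh| := hsqrt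
    rw [this]
    have htws : t * (wh + s * xh) = |wh| + |xh| := tws_key wh xh hw hx
    rw [htws]
    ring
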